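/- For every m ≥ 0, ε > 0, and every (x, t) ∈ εℤ² with t ≥ 0, one has ã₁(x, t, m, ε) = ã₁(−x, t, m, ε). -/

import Mathlib

open Complex Real Filter Asymptotics

noncomputable section

/-- Number of turns of the checker path with `T` moves whose set of indices of
rightward moves (among moves `0, …, T-1`) is `R`. -/
def turnsOf (T : ℕ) (R : Finset ℕ) : ℕ :=
  ((Finset.Ico 1 T).filter fun i => ¬((i ∈ R) ↔ (i - 1 ∈ R))).card

/-- The Feynman-checkers wave function on the integer lattice, with `μ = m·ε`:
`waveA X T μ = a(X·ε, T·ε, m, ε)`.  A checker path from `(0,0)` to `(X·ε, T·ε)`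
consists of `T` moves, each `(ε,ε)` ("right") or `(-ε,ε)` ("left"); it is
determined by the set `R ⊆ {0,…,T-1}` of indices of its rightward moves.  The
path ends at `X·ε` iff `R.card - (T - R.card) = X`, and its second point is
`(ε,ε)` iff `0 ∈ R`. -/
def waveA (X : ℤ) (T : ℕ) (μ : ℝ) : ℂ :=
  (((1 + μ ^ 2) ^ ((1 - (T : ℝ)) / 2) : ℝ) : ℂ) * Complex.I *
    ∑ R ∈ (Finset.range T).powerset,
      if 0 ∈ R ∧ 2 * (R.card : ℤ) - (T : ℤ) = X then
        (-Complex.I * (μ : ℂ)) ^ turnsOf T R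
      else 0

/-- The wave function `a(x, t, m, ε)` for lattice points `(x,t) ∈ εℤ²`. -/
def wf (x t m ε : ℝ) : ℂ := waveA ⌊x / ε⌋ ⌊t / ε⌋.toNat (m * ε)

/-- `ã₁(x, t, m, ε) = Re a(x, t+ε, m, ε)`. -/
def a1 (x t m ε : ℝ) : ℝ := (wf x (t + ε) m ε).re

/-- `ã₂(x, t, m, ε) = Im a(x+ε, t+ε, m, ε)`. -/
def a2 (x t m ε : ℝ) : ℝ := (wf (x + ε) (t + ε) m ε).im

end

namespace Stmt15Aux


def rfl' (N : ℕ) (R : Finset ℕ) : Finset ℕ :=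
  (Finset.range N).filter fun i => (N - 1 - i) ∉ R

lemma mem_rfl' {N i : ℕ} {R : Finset ℕ} : i ∈ rfl' N R ↔ i < N ∧ N - 1 - i ∉ R := by
  simp [rfl']

lemma rfl'_subset (N : ℕ) (R : Finset ℕ) : rfl' N R ⊆ Finset.range N :=
  Finset.filter_subset _ _

lemma rfl'_rfl' {N : ℕ} {R : Finset ℕ} (hR : R ⊆ Finset.range N) : rfl' N (rfl' N R) = R := by
  ext i
  simp only [mem_rfl', not_and, not_not]
  constructor
  · rintro ⟨hi, h⟩
    have := h (by omega)
    rwa [show N - 1 - (N - 1 - i) = i by omega] at this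
  · intro hiR
    have hi : i < N := Finset.mem_range.mp (hR hiR)
    exact ⟨hi, fun _ => by rwa [show N - 1 - (N - 1 - i) = i by omega]⟩

lemma card_rfl' {N : ℕ} {R : Finset ℕ} (hR : R ⊆ Finset.range N) :
    (rfl' N R).card = N - R.card := by
  have h1 : ((Finset.range N).filter fun i => N - 1 - i ∈ R).card = R.card := by
    apply Finset.card_nbij' (fun i => N - 1 - i) (fun i => N - 1 - i)
    · intro i hi
      simp only [Finset.mem_coe, Finset.mem_filter, Finset.mem_range] at hi ⊢
      exact hi.2
    · intro r hr
      have : r < N := Finset.mem_range.mp (hR hr)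
      simp only [Finset.mem_coe, Finset.mem_filter, Finset.mem_range]
      constructor
      · omega
      · rwa [show N - 1 - (N - 1 - r) = r by omega]
    · intro i hi
      simp only [Finset.mem_coe, Finset.mem_filter, Finset.mem_range] at hi ⊢
      omega
    · intro r hr
      have : r < N := Finset.mem_range.mp (hR hr)
      dsimp only
      omega
  have h2 := Finset.card_filter_add_card_filter_not
    (s := Finset.range N) (p := fun i => N - 1 - i ∈ R)
  have h3 : (rfl' N R).card = ((Finset.range N).filter fun i => ¬(N - 1 - i ∈ R)).card := rfl
  rw [h3]
  rw [h1] at h2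
  simp only [Finset.card_range] at h2
  omega

lemma turnsOf_rfl' {N : ℕ} (R : Finset ℕ) : turnsOf N (rfl' N R) = turnsOf N R := by
  unfold turnsOf
  apply Finset.card_nbij' (fun i => N - i) (fun i => N - i)
  · intro i hi
    simp only [Finset.mem_coe, Finset.mem_filter, Finset.mem_Ico, mem_rfl'] at hi ⊢
    obtain ⟨⟨h1, h2⟩, h3⟩ := hi
    refine ⟨⟨by omega, by omega⟩, ?_⟩
    rw [show i - 1 < N ∧ N - 1 - (i - 1) ∉ R ↔ (True ∧ N - 1 - (i-1) ∉ R) by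
      simp; omega] at h3
    rw [show (i < N ∧ N - 1 - i ∉ R) ↔ (True ∧ N - 1 - i ∉ R) by simp; omega] at h3
    rw [show N - 1 - (i - 1) = N - i by omega] at h3
    rw [show N - i - 1 = N - 1 - i by omega]
    tauto
  · intro i hi
    simp only [Finset.mem_coe, Finset.mem_filter, Finset.mem_Ico, mem_rfl'] at hi ⊢
    obtain ⟨⟨h1, h2⟩, h3⟩ := hi
    refine ⟨⟨by omega, by omega⟩, ?_⟩
    rw [show (N - i < N ∧ N - 1 - (N - i) ∉ R ↔ i - 1 ∉ R) by
      constructor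
      · rintro ⟨_, h⟩; rwa [show N - 1 - (N - i) = i - 1 by omega] at h
      · intro h; exact ⟨by omega, by rwa [show N - 1 - (N - i) = i - 1 by omega]⟩]
    rw [show (N - i - 1 < N ∧ N - 1 - (N - i - 1) ∉ R ↔ i ∉ R) by
      constructor
      · rintro ⟨_, h⟩; rwa [show N - 1 - (N - i - 1) = i by omega] at h
      · intro h; exact ⟨by omega, by rwa [show N - 1 - (N - i - 1) = i by omega]⟩]
    tauto
  · intro i hi
    simp only [Finset.mem_coe, Finset.mem_filter, Finset.mem_Ico] at hi ⊢
    omega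
  · intro i hi
    simp only [Finset.mem_coe, Finset.mem_filter, Finset.mem_Ico] at hi ⊢
    omega

lemma parity (N : ℕ) (R : Finset ℕ) : Even (turnsOf (N + 1) R) ↔ (0 ∈ R ↔ N ∈ R) := by
  induction N with
  | zero => simp [turnsOf]
  | succ n ih =>
    have hins : Finset.Ico 1 (n + 2) = insert (n + 1) (Finset.Ico 1 (n + 1)) := by
      ext x; simp only [Finset.mem_Ico, Finset.mem_insert]; omega
    have hstep : turnsOf (n + 2) R
        = turnsOf (n + 1) R + (if ¬((n + 1 ∈ R) ↔ (n ∈ R)) then 1 else 0) := by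
      unfold turnsOf
      rw [hins, Finset.filter_insert]
      have hnm : (n + 1) ∉ (Finset.Ico 1 (n + 1)).filter fun i => ¬((i ∈ R) ↔ (i - 1 ∈ R)) := by
        simp [Finset.mem_Ico]
      split
      · rename_i h
        rw [Finset.card_insert_of_notMem hnm]
        simp only [Nat.add_one_sub_one] at h
        simp [h]
      · rename_i h
        simp only [Nat.add_one_sub_one] at h
        simp [h]
    rw [hstep]
    by_cases h : (n + 1 ∈ R) ↔ (n ∈ R)
    · simp only [h, not_true_eq_false, if_false, add_zero, ih]
    · simp only [h, not_false_eq_true, if_true, Nat.even_add_one, ih]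
      tauto

lemma im_pow_even (μ : ℝ) {n : ℕ} (h : Even n) : ((-Complex.I * μ) ^ n).im = 0 := by
  obtain ⟨k, hk⟩ := h
  have h2 : (-Complex.I * (μ : ℂ)) ^ 2 = ((-(μ ^ 2) : ℝ) : ℂ) := by
    push_cast
    rw [mul_pow, neg_pow, Complex.I_sq]
    ring
  rw [show n = 2 * k by omega, pow_mul, h2, ← Complex.ofReal_pow]
  exact Complex.ofReal_im _


lemma waveA_re_symm (X : ℤ) (N : ℕ) (μ : ℝ) :
    (waveA X (N + 1) μ).re = (waveA (-X) (N + 1) μ).re := by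
  have key : (∑ R ∈ (Finset.range (N + 1)).powerset,
        if 0 ∈ R ∧ 2 * (R.card : ℤ) - ((N + 1 : ℕ) : ℤ) = X then
          (-Complex.I * (μ : ℂ)) ^ turnsOf (N + 1) R else 0).im
      = (∑ R ∈ (Finset.range (N + 1)).powerset,
        if 0 ∈ R ∧ 2 * (R.card : ℤ) - ((N + 1 : ℕ) : ℤ) = -X then
          (-Complex.I * (μ : ℂ)) ^ turnsOf (N + 1) R else 0).im := by
    rw [Complex.im_sum, Complex.im_sum]
    simp only [apply_ite Complex.im, Complex.zero_im]
    refine Finset.sum_nbij' (rfl' (N + 1)) (rfl' (N + 1)) ?_ ?_ ?_ ?_ ?_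
    · intro R _; exact Finset.mem_powerset.mpr (rfl'_subset _ _)
    · intro R _; exact Finset.mem_powerset.mpr (rfl'_subset _ _)
    · intro R hR; exact rfl'_rfl' (Finset.mem_powerset.mp hR)
    · intro R hR; exact rfl'_rfl' (Finset.mem_powerset.mp hR)
    · intro R hR
      have hR' := Finset.mem_powerset.mp hR
      have hcard : R.card ≤ N + 1 := by
        have := Finset.card_le_card hR'; simpa using this
      have hc : (rfl' (N + 1) R).card = N + 1 - R.card := card_rfl' hR'
      have ht := turnsOf_rfl' (N := N + 1) R
      by_cases he : Even (turnsOf (N + 1) R)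
      · rw [ht]
        have hz := im_pow_even μ he
        rw [neg_mul] at hz
        split <;> split <;> simp [hz]
      · have h0 : (0 ∈ rfl' (N + 1) R) ↔ (N ∉ R) := by
          rw [mem_rfl']; simp
        have hodd : ¬(0 ∈ R ↔ N ∈ R) := fun hh => he ((parity N R).mpr hh)
        have hcond : (0 ∈ R ∧ 2 * (R.card : ℤ) - ((N + 1 : ℕ) : ℤ) = X) ↔
            (0 ∈ rfl' (N + 1) R ∧
              2 * ((rfl' (N + 1) R).card : ℤ) - ((N + 1 : ℕ) : ℤ) = -X) := by
          rw [h0, hc]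
          constructor
          · rintro ⟨ha, hb⟩; exact ⟨by tauto, by omega⟩
          · rintro ⟨ha, hb⟩; exact ⟨by tauto, by omega⟩
        rw [ht, if_congr hcond rfl rfl]
  simp only [waveA]
  have hre : ∀ (c : ℝ) (z : ℂ), (((c : ℝ) : ℂ) * Complex.I * z).re = -(c * z.im) := by
    intro c z
    simp [Complex.mul_re, Complex.mul_im]
  rw [hre, hre, key]

end Stmt15Aux

theorem stmt15 (m ε : ℝ) (hm : 0 ≤ m) (hε : 0 < ε) (X T : ℤ) (hT : (0 : ℝ) ≤ (T : ℝ) * ε) :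
    a1 ((X : ℝ) * ε) ((T : ℝ) * ε) m ε = a1 (-((X : ℝ) * ε)) ((T : ℝ) * ε) m ε := by
  have hT0 : 0 ≤ T := by
    have h1 : (0 : ℝ) ≤ (T : ℝ) := by nlinarith
    exact_mod_cast h1
  unfold a1 wf
  have h1 : (X : ℝ) * ε / ε = (X : ℝ) := mul_div_cancel_right₀ _ hε.ne'
  have h2 : -((X : ℝ) * ε) / ε = ((-X : ℤ) : ℝ) := by
    push_cast; rw [neg_div]; rw [mul_div_cancel_right₀ _ hε.ne']
  have h3 : ((T : ℝ) * ε + ε) / ε = (((T + 1 : ℤ)) : ℝ) := by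
    field_simp
    push_cast
    ring
  rw [h1, h2, h3]
  simp only [Int.floor_intCast]
  have h5 : (T + 1).toNat = T.toNat + 1 := by omega
  rw [h5]
  exact Stmt15Aux.waveA_re_symm X T.toNat (m * ε)
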